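/- Let m, C, t be natural numbers with t ≤ m, let D be a finite family of test items, each item i consisting of a prediction vector p_i : Fin m → Fin C and a true label y_i : Fin C, and declare item i 'individually certified at radius t' if its majority-vote label equals y_i and its certified size is at least t, and 'jointly certified for a set Γ ⊆ Fin m' if its majority-vote label equals y_i and the joint-certification condition holds for Γ. Then the joint certified accuracy, namely the minimum over all subsets Γ of Fin m of cardinality t of the number of jointly certified items for Γ, is at least the number of individually certified items at radius t. -/

import Mathlib

/-- Number of base classifiers predicting class `c`. -/
def voteCount {m C : ℕ} (p : Fin m → Fin C) (c : Fin C) : ℕ :=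
  (Finset.univ.filter fun j => p j = c).card

/-- Majority-vote label: smallest label among those attaining the maximal vote count. -/
def majorityLabel {m C : ℕ} (hC : 0 < C) (p : Fin m → Fin C) : Fin C :=
  (Finset.univ.filter fun c => voteCount p c = Finset.univ.sup (voteCount p)).min'
    (by
      haveI : Nonempty (Fin C) := ⟨⟨0, hC⟩⟩
      obtain ⟨c, -, hc⟩ := Finset.exists_mem_eq_sup (Finset.univ : Finset (Fin C))
        Finset.univ_nonempty (voteCount p)
      exact ⟨c, Finset.mem_filter.mpr ⟨Finset.mem_univ c, hc.symm⟩⟩)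

/-- Certified-size gap `M y - max_{c ≠ y}(M c + I(c < y))` of a prediction vector. -/
def certGap {m C : ℕ} (hC : 0 < C) (p : Fin m → Fin C) : ℕ :=
  voteCount p (majorityLabel hC p) -
    ((Finset.univ.erase (majorityLabel hC p)).sup fun c =>
      voteCount p c + if c < majorityLabel hC p then 1 else 0)

/-- Joint-certification condition of item with predictions `p` for corrupted set `Γ`. -/
def jointCond {m C : ℕ} (hC : 0 < C) (p : Fin m → Fin C) (Γ : Finset (Fin m)) : Prop :=
  voteCount p (majorityLabel hC p) -
      (Γ.filter fun j => p j = majorityLabel hC p).card ≥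
    ((Finset.univ.erase (majorityLabel hC p)).sup fun c =>
      voteCount p c + (Γ.filter fun j => p j ≠ c).card +
        if c < majorityLabel hC p then 1 else 0)

instance {m C : ℕ} (hC : 0 < C) (p : Fin m → Fin C) (Γ : Finset (Fin m)) :
    Decidable (jointCond hC p Γ) := by unfold jointCond; infer_instance

/-- Section 4.2.3 of TextGuard: the joint certified accuracy (minimum over all
    corrupted sets `Γ` of size `t` of the number of jointly certified items)
    is at least the number of individually certified items at radius `t`. -/
lemma maj_key {m C : ℕ} (hC : 0 < C) (p : Fin m → Fin C) {c : Fin C}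
    (hc : c ≠ majorityLabel hC p) :
    voteCount p c + (if c < majorityLabel hC p then 1 else 0) ≤
      voteCount p (majorityLabel hC p) := by
  set y := majorityLabel hC p with hy
  have hmem := Finset.min'_mem (Finset.univ.filter fun c =>
      voteCount p c = Finset.univ.sup (voteCount p)) (by
    haveI : Nonempty (Fin C) := ⟨⟨0, hC⟩⟩
    obtain ⟨c, -, hc⟩ := Finset.exists_mem_eq_sup (Finset.univ : Finset (Fin C))
      Finset.univ_nonempty (voteCount p)
    exact ⟨c, Finset.mem_filter.mpr ⟨Finset.mem_univ c, hc.symm⟩⟩)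
  rw [Finset.mem_filter] at hmem
  have hysup : voteCount p y = Finset.univ.sup (voteCount p) := hmem.2
  have hle : voteCount p c ≤ voteCount p y := by
    rw [hysup]; exact Finset.le_sup (Finset.mem_univ c)
  split_ifs with h
  · rcases lt_or_eq_of_le hle with h' | h'
    · omega
    · exfalso
      have : y ≤ c := Finset.min'_le _ c (Finset.mem_filter.mpr
        ⟨Finset.mem_univ c, h' ▸ hysup⟩)
      exact absurd h (not_lt.mpr this)
  · simpa using hle

theorem joint_certified_accuracy_ge_individual {m C : ℕ} (hm : 0 < m) (hC : 0 < C)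
    (t : ℕ) (htm : t ≤ m) (n : ℕ)
    (p : Fin n → Fin m → Fin C) (ytrue : Fin n → Fin C) :
    (Finset.univ.filter fun i =>
        majorityLabel hC (p i) = ytrue i ∧ 2 * t ≤ certGap hC (p i)).card ≤
    sInf {k : ℕ | ∃ Γ : Finset (Fin m), Γ.card = t ∧
      k = (Finset.univ.filter fun i =>
        majorityLabel hC (p i) = ytrue i ∧ jointCond hC (p i) Γ).card} := by
  apply le_csInf
  · obtain ⟨Γ, -, hΓc⟩ := Finset.exists_subset_card_eq (s := (Finset.univ : Finset (Fin m))) (n := t)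
      (by simpa using htm)
    exact ⟨_, Γ, hΓc, rfl⟩
  · rintro k ⟨Γ, hΓ, rfl⟩
    apply Finset.card_le_card
    intro i hi
    rw [Finset.mem_filter] at hi ⊢
    obtain ⟨hu, hy, hcert⟩ := hi
    refine ⟨hu, hy, ?_⟩
    unfold jointCond
    unfold certGap at hcert
    set q := p i
    set y := majorityLabel hC q with hydef
    set S := (Finset.univ.erase y).sup fun c =>
      voteCount q c + if c < y then 1 else 0 with hSdef
    have hSle : S ≤ voteCount q y :=
      Finset.sup_le fun c hc => maj_key hC q (Finset.ne_of_mem_erase hc)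
    have hcert' : S + 2 * t ≤ voteCount q y := by omega
    have ha : (Γ.filter fun j => q j = y).card ≤ voteCount q y :=
      Finset.card_le_card (by
        intro j hj
        rw [Finset.mem_filter] at hj ⊢
        exact ⟨Finset.mem_univ j, hj.2⟩)
    set a := (Γ.filter fun j => q j = y).card
    apply Finset.sup_le
    intro c hc
    apply Nat.le_sub_of_add_le
    have hcy : c ≠ y := Finset.ne_of_mem_erase hc
    set bc := (Γ.filter fun j => q j = c).card with hbc
    have htc : (Γ.filter fun j => q j ≠ c).card + bc = t := by
      have h1 := Finset.card_filter_add_card_filter_not (s := Γ)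
        (p := fun j => q j = c)
      have h2 : (Γ.filter fun j => ¬ (q j = c)).card
          = (Γ.filter fun j => q j ≠ c).card := rfl
      omega
    have hab : a + bc ≤ t := by
      have hdisj : Disjoint (Γ.filter fun j => q j = y) (Γ.filter fun j => q j = c) := by
        rw [Finset.disjoint_left]
        intro j hj hj'
        rw [Finset.mem_filter] at hj hj'
        exact hcy (hj.2 ▸ hj'.2 ▸ rfl)
      calc a + bc = ((Γ.filter fun j => q j = y) ∪ (Γ.filter fun j => q j = c)).card := by
            rw [Finset.card_union_of_disjoint hdisj]
        _ ≤ Γ.card := Finset.card_le_card (Finset.union_subset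
            (Finset.filter_subset _ _) (Finset.filter_subset _ _))
        _ = t := hΓ
    have hMc : voteCount q c + (if c < y then 1 else 0) ≤ S := by
      rw [hSdef]
      exact Finset.le_sup (f := fun c => voteCount q c + if c < y then 1 else 0) hc
    omega
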